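/- Let μ* be an upper density on ℕ, and for every positive integer k and S ⊆ ℕ let w_k(S) be the number of residues h ∈ {0, …, k−1} such that μ*(S ∩ (k·ℕ + h)) ≠ 0. Let X ⊆ ℕ and let (k_n)_{n ≥ 1} be a sequence of pairwise coprime positive integers. If the series ∑_{n ≥ 1} (1 − w_{k_n}(X)/k_n) diverges to infinity, then μ*(X) = 0. In particular, if ∑_{n ≥ 1} 1/k_n = ∞ and w_{k_n}(X) ≤ k_n − 1 for every n ≥ 1, then μ*(X) = 0. -/

import Mathlib

open Set Filter Topology

/-- An upper quasi-density on ℕ. -/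
def IsUpperQuasiDensity (μ : Set ℕ → ℝ) : Prop :=
  μ Set.univ = 1 ∧
  (∀ X : Set ℕ, μ X ≤ 1) ∧
  (∀ X Y : Set ℕ, μ (X ∪ Y) ≤ μ X + μ Y) ∧
  (∀ (X : Set ℕ) (k : ℕ), 0 < k → μ ((fun x => k * x) '' X) = μ X / k) ∧
  (∀ (X : Set ℕ) (h : ℕ), μ ((fun x => x + h) '' X) = μ X)

/-- An upper density on ℕ: a monotone upper quasi-density. -/
def IsUpperDensity (μ : Set ℕ → ℝ) : Prop :=
  IsUpperQuasiDensity μ ∧ ∀ X Y : Set ℕ, X ⊆ Y → μ X ≤ μ Y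

/-- A set of naturals is small if every upper quasi-density vanishes on it. -/
def SmallSet (X : Set ℕ) : Prop :=
  ∀ μ : Set ℕ → ℝ, IsUpperQuasiDensity μ → μ X = 0

/-- The upper asymptotic density of a set of naturals. -/
noncomputable def upperAsymptoticDensity (X : Set ℕ) : ℝ :=
  limsup (fun n : ℕ => ((X ∩ Set.Icc 1 n).ncard : ℝ) / n) atTop

/-- The arithmetic progression k·ℕ + h. -/
def AP (k h : ℕ) : Set ℕ := {x : ℕ | ∃ m : ℕ, x = k * m + h}

/-- A finite union of arithmetic progressions of ℕ. -/
def IsFinUnionAP (A : Set ℕ) : Prop :=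
  ∃ s : Finset (ℕ × ℕ), (∀ p ∈ s, 0 < p.1) ∧ A = ⋃ p ∈ s, AP p.1 p.2

/-- The upper Buck density of a set of naturals. -/
noncomputable def buckDensity (X : Set ℕ) : ℝ :=
  sInf {d : ℝ | ∃ A : Set ℕ, IsFinUnionAP A ∧ X ⊆ A ∧ d = upperAsymptoticDensity A}

/-- `rk k X` is the number of residues h ∈ [0, k-1] with X ∩ (k·ℕ + h) ≠ ∅. -/
noncomputable def rk (k : ℕ) (X : Set ℕ) : ℕ :=
  {h : ℕ | h < k ∧ (X ∩ AP k h).Nonempty}.ncard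

/-- `wk μ k S` is the number of residues h ∈ [0, k-1] with μ(S ∩ (k·ℕ + h)) ≠ 0. -/
noncomputable def wk (μ : Set ℕ → ℝ) (k : ℕ) (S : Set ℕ) : ℕ :=
  {h : ℕ | h < k ∧ μ (S ∩ AP k h) ≠ 0}.ncard

namespace ModCritAux

variable {μ : Set ℕ → ℝ}

lemma mu_empty (hμ : IsUpperQuasiDensity μ) : μ ∅ = 0 := by
  have h := hμ.2.2.2.1 ∅ 2 (by norm_num)
  simp only [Set.image_empty] at h
  linarith

lemma mu_nonneg (hμ : IsUpperDensity μ) (X : Set ℕ) : 0 ≤ μ X := by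
  have := hμ.2 ∅ X (Set.empty_subset X)
  rw [mu_empty hμ.1] at this; exact this

lemma AP_eq_image (k h : ℕ) :
    AP k h = (fun x => x + h) '' ((fun x => k * x) '' Set.univ) := by
  rw [Set.image_image, Set.image_univ]
  ext x
  simp only [AP, Set.mem_setOf_eq, Set.mem_range]
  exact ⟨fun ⟨m, hm⟩ => ⟨m, hm.symm⟩, fun ⟨m, hm⟩ => ⟨m, hm.symm⟩⟩

lemma mu_AP (hμ : IsUpperQuasiDensity μ) {k : ℕ} (hk : 0 < k) (h : ℕ) :
    μ (AP k h) = 1 / k := by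
  rw [AP_eq_image, hμ.2.2.2.2, hμ.2.2.2.1 _ _ hk, hμ.1]

lemma subadd_finset (hμ : IsUpperQuasiDensity μ) {ι : Type*} [DecidableEq ι]
    (s : Finset ι) (f : ι → Set ℕ) :
    μ (⋃ i ∈ s, f i) ≤ ∑ i ∈ s, μ (f i) := by
  induction s using Finset.induction_on with
  | empty => simp [mu_empty hμ]
  | insert a s ha ih =>
    rw [Finset.set_biUnion_insert, Finset.sum_insert ha]
    exact le_trans (hμ.2.2.1 _ _) (by linarith)

lemma cover (k : ℕ) (hk : 0 < k) (X : Set ℕ) :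
    X ⊆ ⋃ h ∈ Finset.range k, (X ∩ AP k h) := by
  intro x hx
  refine Set.mem_biUnion (Finset.mem_range.2 (Nat.mod_lt x hk)) ⟨hx, ⟨x / k, ?_⟩⟩
  exact (Nat.div_add_mod x k).symm

lemma wk_eq_card (μ : Set ℕ → ℝ) (k : ℕ) (X : Set ℕ) :
    wk μ k X = ((Finset.range k).filter fun h => μ (X ∩ AP k h) ≠ 0).card := by
  rw [wk, ← Set.ncard_coe_finset]
  congr 1
  ext h
  simp [Finset.mem_filter, Finset.mem_range, and_comm]

lemma wk_mono (hμ : IsUpperDensity μ) (k : ℕ) {Y X : Set ℕ} (hYX : Y ⊆ X) :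
    wk μ k Y ≤ wk μ k X := by
  rw [wk_eq_card, wk_eq_card]
  apply Finset.card_le_card
  apply Finset.monotone_filter_right
  intro h _ hY
  have h1 : μ (Y ∩ AP k h) ≤ μ (X ∩ AP k h) :=
    hμ.2 _ _ (Set.inter_subset_inter_left _ hYX)
  have h2 := mu_nonneg hμ (Y ∩ AP k h)
  intro hX
  rw [hX] at h1
  exact hY (le_antisymm h1 h2)

lemma mem_AP_iff {k h x : ℕ} (hk : 0 < k) : x ∈ AP k h ↔ h ≤ x ∧ x % k = h % k := by
  constructor
  · rintro ⟨m, rfl⟩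
    exact ⟨Nat.le_add_left _ _, by simp [Nat.mul_add_mod]⟩
  · rintro ⟨hle, hmod⟩
    have : k ∣ x - h := (Nat.modEq_iff_dvd' hle).1 hmod.symm
    obtain ⟨m, hm⟩ := this
    exact ⟨m, by omega⟩

lemma AP_inter_subset {M k0 h0 h : ℕ} (hM : 0 < M) (hk : 0 < k0)
    (hco : Nat.Coprime M k0) :
    ∃ c, AP M h0 ∩ AP k0 h ⊆ AP (M * k0) c := by
  rcases Set.eq_empty_or_nonempty (AP M h0 ∩ AP k0 h) with he | hne
  · exact ⟨0, by simp [he]⟩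
  · set c := sInf (AP M h0 ∩ AP k0 h) with hc
    have hcmem := Nat.sInf_mem hne
    refine ⟨c, fun x hx => ?_⟩
    have hle : c ≤ x := Nat.sInf_le hx
    have hxM := (mem_AP_iff hM).1 hx.1
    have hxk := (mem_AP_iff hk).1 hx.2
    have hcM := (mem_AP_iff hM).1 hcmem.1
    have hck := (mem_AP_iff hk).1 hcmem.2
    have hmodM : x ≡ c [MOD M] := by
      unfold Nat.ModEq; rw [hxM.2, hcM.2]
    have hmodk : x ≡ c [MOD k0] := by
      unfold Nat.ModEq; rw [hxk.2, hck.2]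
    have : x ≡ c [MOD M * k0] :=
      (Nat.modEq_and_modEq_iff_modEq_mul hco).1 ⟨hmodM, hmodk⟩
    obtain ⟨m, hm⟩ := (Nat.modEq_iff_dvd' hle).1 this.symm
    exact ⟨m, by omega⟩

lemma list_prod_nonneg {f : ℕ → ℝ} : ∀ l : List ℕ, (∀ q ∈ l, 0 ≤ f q) →
    0 ≤ (l.map f).prod := by
  intro l hl
  induction l with
  | nil => simp
  | cons a t ih =>
    simp only [List.map_cons, List.prod_cons]
    exact mul_nonneg (hl a (by simp)) (ih fun q hq => hl q (by simp [hq]))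

lemma list_prod_le {f g : ℕ → ℝ} : ∀ l : List ℕ, (∀ q ∈ l, 0 ≤ f q) →
    (∀ q ∈ l, f q ≤ g q) → (l.map f).prod ≤ (l.map g).prod := by
  intro l h0 hle
  induction l with
  | nil => simp
  | cons a t ih =>
    simp only [List.map_cons, List.prod_cons]
    have h0t : ∀ q ∈ t, 0 ≤ f q := fun q hq => h0 q (by simp [hq])
    refine mul_le_mul (hle a (by simp)) (ih h0t (fun q hq => hle q (by simp [hq])))
      (list_prod_nonneg t h0t) (le_trans (h0 a (by simp)) (hle a (by simp)))

/-- Key induction. -/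
lemma key (hμ : IsUpperDensity μ) :
    ∀ (L : List ℕ), (∀ q ∈ L, 0 < q) → L.Pairwise Nat.Coprime →
    ∀ (M h0 : ℕ), 0 < M → (∀ q ∈ L, Nat.Coprime M q) →
    ∀ Y : Set ℕ, Y ⊆ AP M h0 →
    μ Y ≤ (1 / M) * (L.map (fun q => (wk μ q Y : ℝ) / q)).prod := by
  intro L
  induction L with
  | nil =>
    intro _ _ M h0 hM _ Y hY
    simp only [List.map_nil, List.prod_nil, mul_one]
    calc μ Y ≤ μ (AP M h0) := hμ.2 _ _ hY
      _ = 1 / M := mu_AP hμ.1 hM h0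
  | cons k0 rest ih =>
    intro hposL hpw M h0 hM hcoL Y hY
    have hk0 : 0 < k0 := hposL k0 (by simp)
    have hMk0 : (0:ℕ) < M * k0 := Nat.mul_pos hM hk0
    set G := (Finset.range k0).filter fun h => μ (Y ∩ AP k0 h) ≠ 0 with hG
    set B := (1 / ((M : ℝ) * k0)) *
      (rest.map (fun q => (wk μ q Y : ℝ) / q)).prod with hB
    have hprodrest_nonneg : 0 ≤ (rest.map (fun q => (wk μ q Y : ℝ) / q)).prod := by
      apply list_prod_nonneg
      intro q hq
      positivity
    have hBnn : 0 ≤ B := by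
      rw [hB]
      apply mul_nonneg _ hprodrest_nonneg
      positivity
    -- each good piece is bounded by B
    have hpiece : ∀ h ∈ G, μ (Y ∩ AP k0 h) ≤ B := by
      intro h hhG
      obtain ⟨c, hc⟩ := AP_inter_subset hM hk0 (hcoL k0 (by simp))
        (h0 := h0) (h := h)
      have hsub : Y ∩ AP k0 h ⊆ AP (M * k0) c :=
        fun x hx => hc ⟨hY hx.1, hx.2⟩
      have hrestpos : ∀ q ∈ rest, 0 < q := fun q hq => hposL q (by simp [hq])
      have hrestco : ∀ q ∈ rest, Nat.Coprime (M * k0) q := by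
        intro q hq
        exact Nat.Coprime.mul (hcoL q (by simp [hq]))
          ((List.pairwise_cons.1 hpw).1 q hq)
      have := ih hrestpos (List.Pairwise.of_cons hpw) (M * k0) c hMk0 hrestco
        (Y ∩ AP k0 h) hsub
      refine le_trans this ?_
      rw [hB]
      push_cast
      apply mul_le_mul_of_nonneg_left _ (by positivity)
      apply list_prod_le
      · intro q hq; positivity
      · intro q hq
        have hwm : (wk μ q (Y ∩ AP k0 h) : ℝ) ≤ (wk μ q Y : ℝ) := by
          exact_mod_cast wk_mono hμ q (Set.inter_subset_left)
        have hq0 : (0:ℝ) < q := by exact_mod_cast hrestpos q hq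
        gcongr
    -- sum decomposition
    have hcover : μ Y ≤ ∑ h ∈ Finset.range k0, μ (Y ∩ AP k0 h) :=
      le_trans (hμ.2 _ _ (cover k0 hk0 Y)) (subadd_finset hμ.1 _ _)
    have hfilter : ∑ h ∈ Finset.range k0, μ (Y ∩ AP k0 h) = ∑ h ∈ G, μ (Y ∩ AP k0 h) := by
      rw [hG]
      exact (Finset.sum_filter_of_ne (fun h _ hne => hne)).symm
    have hsum : ∑ h ∈ G, μ (Y ∩ AP k0 h) ≤ (G.card : ℝ) * B := by
      calc ∑ h ∈ G, μ (Y ∩ AP k0 h) ≤ ∑ _h ∈ G, B := Finset.sum_le_sum hpiece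
        _ = (G.card : ℝ) * B := by rw [Finset.sum_const, nsmul_eq_mul]
    have hwkcard : (wk μ k0 Y : ℝ) = (G.card : ℝ) := by
      rw [wk_eq_card]
    calc μ Y ≤ (G.card : ℝ) * B := by rw [hfilter] at hcover; linarith
      _ = (1 / M) * ((k0 :: rest).map (fun q => (wk μ q Y : ℝ) / q)).prod := by
        rw [hB, List.map_cons, List.prod_cons, ← hwkcard]
        have hk0r : (k0:ℝ) ≠ 0 := by exact_mod_cast hk0.ne'
        have hMr : (M:ℝ) ≠ 0 := by exact_mod_cast hM.ne'
        field_simp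
        try ring
    done

lemma list_range_map_prod (n : ℕ) (f : ℕ → ℝ) :
    ((List.range n).map f).prod = ∏ i ∈ Finset.range n, f i := by
  induction n with
  | zero => simp
  | succ n ih => rw [List.range_succ, Finset.prod_range_succ, List.map_append]; simp [ih]

lemma mu_le_prod (hμ : IsUpperDensity μ) (X : Set ℕ) (k : ℕ → ℕ)
    (hpos : ∀ n, 0 < k n) (hcop : ∀ m n, m ≠ n → Nat.Coprime (k m) (k n)) (N : ℕ) :
    μ X ≤ ∏ i ∈ Finset.range N, ((wk μ (k i) X : ℝ) / (k i)) := by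
  have hpw : ((List.range N).map k).Pairwise Nat.Coprime := by
    refine List.Pairwise.map k (fun a b h => h) ?_
    exact List.Pairwise.imp (fun {a b} h => hcop a b h.ne) (List.pairwise_lt_range (n := N))
  have h := key hμ ((List.range N).map k)
    (fun q hq => by obtain ⟨i, _, rfl⟩ := List.mem_map.1 hq; exact hpos i)
    hpw 1 0 one_pos
    (fun q _ => Nat.coprime_one_left q)
    X (fun x _ => ⟨x, by omega⟩)
  rw [List.map_map, list_range_map_prod] at h
  simpa using h


end ModCritAux


/-- If the series ∑ (1 - w_{k_n}(X)/k_n) diverges, then μ*(X) = 0; in particular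
this holds if ∑ 1/k_n = ∞ and w_{k_n}(X) ≤ k_n - 1 for every n. -/
theorem modular_criterion_w (μ : Set ℕ → ℝ) (hμ : IsUpperDensity μ)
    (X : Set ℕ) (k : ℕ → ℕ) (hpos : ∀ n, 0 < k n)
    (hcop : ∀ m n, m ≠ n → Nat.Coprime (k m) (k n)) :
    (Tendsto (fun n : ℕ =>
        ∑ i ∈ Finset.range n, (1 - (wk μ (k i) X : ℝ) / (k i : ℝ))) atTop atTop →
      μ X = 0) ∧
    ((Tendsto (fun n : ℕ => ∑ i ∈ Finset.range n, (1 : ℝ) / (k i : ℝ)) atTop atTop ∧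
        ∀ n : ℕ, wk μ (k n) X ≤ k n - 1) →
      μ X = 0) := by
  have main : Tendsto (fun n : ℕ =>
      ∑ i ∈ Finset.range n, (1 - (wk μ (k i) X : ℝ) / (k i : ℝ))) atTop atTop →
      μ X = 0 := by
    intro hS
    have hbound : ∀ N : ℕ, μ X ≤
        Real.exp (-(∑ i ∈ Finset.range N, (1 - (wk μ (k i) X : ℝ) / (k i : ℝ)))) := by
      intro N
      refine le_trans (ModCritAux.mu_le_prod hμ X k hpos hcop N) ?_
      rw [← Finset.sum_neg_distrib, Real.exp_sum]
      refine Finset.prod_le_prod (fun i _ => by positivity) (fun i _ => ?_)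
      have := Real.add_one_le_exp (-(1 - (wk μ (k i) X : ℝ) / (k i : ℝ)))
      linarith
    have htend : Tendsto (fun N : ℕ =>
        Real.exp (-(∑ i ∈ Finset.range N, (1 - (wk μ (k i) X : ℝ) / (k i : ℝ)))))
        atTop (𝓝 0) :=
      Real.tendsto_exp_atBot.comp (tendsto_neg_atTop_atBot.comp hS)
    have h0 : μ X ≤ 0 := ge_of_tendsto' htend hbound
    exact le_antisymm h0 (ModCritAux.mu_nonneg hμ X)
  refine ⟨main, ?_⟩
  rintro ⟨hsum, hw⟩
  apply main
  refine tendsto_atTop_mono (fun N => Finset.sum_le_sum fun i _ => ?_) hsum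
  have hki : (0:ℝ) < (k i : ℝ) := by exact_mod_cast hpos i
  have hwi : (wk μ (k i) X : ℝ) + 1 ≤ (k i : ℝ) := by
    have h1 := hw i
    have h2 := hpos i
    exact_mod_cast (by omega : wk μ (k i) X + 1 ≤ k i)
  rw [le_sub_iff_add_le, ← add_div, div_le_one hki]
  linarith
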